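/- arXiv:2109.03338 — 4 statements merged into one kernel-verified Lean document; each statement's English description precedes it below -/
import Mathlib

section
/- The matrix A_e annihilates N, i.e., A_e * N = 0 (so every column of N lies in the kernel of A_e). -/
open Matrix

/-- The MPC equality-constraint matrix `A_e ∈ ℝ^{T·n_x × 2T·n_x}`, viewed block-wise.
Variables are ordered as `(u(0), x(1), u(1), x(2), …, u(T−1), x(T))`: the variable
column block `(s, 0)` corresponds to `u(s)` and `(s, 1)` corresponds to `x(s+1)`.
Block row `t` has `−B` in the `u(t)` column block, `I` in the `x(t+1)` column block,
and (for `t ≥ 1`) `−A` in the `x(t)` column block; all other blocks are zero. -/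
noncomputable def AeMat (T nx : ℕ) (A B : Matrix (Fin nx) (Fin nx) ℝ) :
    Matrix (Fin T × Fin nx) ((Fin T × Fin 2) × Fin nx) ℝ :=
  fun p q =>
    (if q.1.1 = p.1 ∧ q.1.2 = 0 then (-B) p.2 q.2 else 0) +
    (if q.1.1 = p.1 ∧ q.1.2 = 1 then (1 : Matrix (Fin nx) (Fin nx) ℝ) p.2 q.2 else 0) +
    (if ((q.1.1 : ℕ) + 1 = (p.1 : ℕ)) ∧ q.1.2 = 1 then (-A) p.2 q.2 else 0)

/-- The sparse null-space basis `N ∈ ℝ^{2T·n_x × T·n_x}`, viewed block-wise.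
Column block `k` has `I` in the `u(k)` row block `(k, 0)`, `B` in the `x(k+1)` row
block `(k, 1)`, and (for `k ≤ T−2`) `C = −B⁻¹AB` in the `u(k+1)` row block
`(k+1, 0)`; all other blocks are zero. -/
noncomputable def NMat (T nx : ℕ) (A B : Matrix (Fin nx) (Fin nx) ℝ) :
    Matrix ((Fin T × Fin 2) × Fin nx) (Fin T × Fin nx) ℝ :=
  fun p q =>
    (if p.1.1 = q.1 ∧ p.1.2 = 0 then (1 : Matrix (Fin nx) (Fin nx) ℝ) p.2 q.2 else 0) +
    (if p.1.1 = q.1 ∧ p.1.2 = 1 then B p.2 q.2 else 0) +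
    (if ((p.1.1 : ℕ) = (q.1 : ℕ) + 1) ∧ p.1.2 = 0 then (-(B⁻¹ * A * B)) p.2 q.2 else 0)

lemma sum_ite_pull {n : ℕ} (p : Prop) [Decidable p] (f : Fin n → ℝ) :
    (∑ m, if p then f m else 0) = if p then ∑ m, f m else 0 := by
  split <;> simp

lemma ite_add_split (p : Prop) [Decidable p] (a b : ℝ) :
    (if p then a + b else 0) = (if p then a else 0) + (if p then b else 0) := by
  split <;> simp

lemma sum_ite_inner {n : ℕ} (t : Fin n) (p : Fin n → Prop) [DecidablePred p] (f : Fin n → ℝ) :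
    (∑ x, if p x then if x = t then f x else 0 else 0) = if p t then f t else 0 := by
  rw [Finset.sum_congr rfl (fun x _ => by split <;> split <;> simp_all :
    ∀ x ∈ Finset.univ, (if p x then if x = t then f x else 0 else 0)
      = if x = t then (if p x then f x else 0) else 0)]
  simp [Finset.sum_ite_eq']

/-- The matrix `A_e` annihilates `N`, i.e. `A_e * N = 0`, so every column
of `N` lies in the kernel of `A_e`. -/
theorem Ae_mul_N_eq_zero (T nx : ℕ) (hT : 1 ≤ T) (hnx : 1 ≤ nx)
    (A B : Matrix (Fin nx) (Fin nx) ℝ) (hB : IsUnit B) :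
    AeMat T nx A B * NMat T nx A B = 0 := by
  ext ⟨t, i⟩ ⟨k, j⟩
  simp only [Matrix.mul_apply, AeMat, NMat, Matrix.zero_apply]
  rw [Fintype.sum_prod_type, Fintype.sum_prod_type]
  simp only [Fin.sum_univ_two]
  simp only [show (0:Fin 2) ≠ 1 by decide, show (1:Fin 2) ≠ 0 by decide, and_true, and_false,
    if_false, if_true, eq_self_iff_true, add_zero, zero_add]
  simp only [add_mul, mul_add, ite_mul, mul_ite, zero_mul, mul_zero, Finset.sum_add_distrib]
  simp only [sum_ite_pull, Finset.sum_add_distrib, ite_add_split]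
  simp only [sum_ite_inner]
  simp only [Finset.sum_ite_eq', Finset.mem_univ, if_true]
  rw [← Matrix.mul_apply, ← Matrix.mul_apply, ← Matrix.mul_apply]
  erw [← Matrix.mul_apply]
  have hBB : B * B⁻¹ = 1 := Matrix.mul_nonsing_inv B ((Matrix.isUnit_iff_isUnit_det B).mp hB)
  have e2 : (-B) * (-(B⁻¹ * A * B)) = A * B := by
    rw [neg_mul_neg, ← Matrix.mul_assoc, ← Matrix.mul_assoc, hBB, Matrix.one_mul]
  rw [e2, Matrix.mul_one, Matrix.one_mul, Matrix.neg_mul]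
  split_ifs with c1 c2 c3 c4 c5 c6 c7 <;>
    simp_all [Matrix.neg_apply]
end

section
/- The columns of N form a basis of the kernel of A_e: the column space of N equals the null space {y ∈ ℝ^{2T·n_x} : A_e y = 0}, which has dimension T·n_x. -/
open Matrix

section helpers
variable {T nx : ℕ} {A B : Matrix (Fin nx) (Fin nx) ℝ}

lemma sum_succ_ite (t : Fin T) (f : Fin T → ℝ) :
    (∑ s : Fin T, if (s : ℕ) + 1 = (t : ℕ) then f s else 0) =
    if h : 0 < (t : ℕ) then f ⟨(t : ℕ) - 1, by omega⟩ else 0 := by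
  by_cases h : 0 < (t : ℕ)
  · rw [dif_pos h, Finset.sum_eq_single (⟨(t : ℕ) - 1, by omega⟩ : Fin T)]
    · rw [if_pos]; simp; omega
    · intro s _ hs
      rw [if_neg]
      intro hc; apply hs; apply Fin.ext; simp; omega
    · simp
  · rw [dif_neg h]
    apply Finset.sum_eq_zero
    intro s _
    rw [if_neg]; omega

lemma Ae_mulVec_apply (y : ((Fin T × Fin 2) × Fin nx) → ℝ) (t : Fin T) (i : Fin nx) :
    (AeMat T nx A B).mulVec y (t, i) =
      (-B).mulVec (fun m => y ((t, 0), m)) i + y ((t, 1), i) +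
      (if h : 0 < (t : ℕ) then
        (-A).mulVec (fun m => y ((⟨(t : ℕ) - 1, by omega⟩, 1), m)) i else 0) := by
  simp only [Matrix.mulVec, dotProduct, AeMat, Fintype.sum_prod_type, Fin.sum_univ_two]
  simp only [add_mul, ite_mul, zero_mul, Finset.sum_add_distrib,
    Finset.sum_ite_irrel, Finset.sum_const_zero]
  simp only [Fin.isValue, show ((0:Fin 2) = 1) = False by simp,
    show ((1:Fin 2) = 0) = False by simp, and_true, and_false, if_false,
    Finset.sum_const_zero, add_zero, zero_add]
  rw [sum_succ_ite]
  simp only [Finset.sum_ite_eq', Finset.mem_univ, if_true, Matrix.one_apply, ite_mul,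
    one_mul, zero_mul, Finset.sum_ite_eq, Matrix.mulVec, dotProduct]
  exact (add_assoc _ _ _).symm

lemma N_mulVec_u (v : (Fin T × Fin nx) → ℝ) (s : Fin T) (i : Fin nx) :
    (NMat T nx A B).mulVec v ((s, 0), i) =
      v (s, i) +
      (if h : 0 < (s : ℕ) then
        (-(B⁻¹ * A * B)).mulVec (fun m => v (⟨(s : ℕ) - 1, by omega⟩, m)) i else 0) := by
  simp only [Matrix.mulVec, dotProduct, NMat, Fintype.sum_prod_type]
  simp only [add_mul, ite_mul, zero_mul, Finset.sum_add_distrib,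
    Finset.sum_ite_irrel, Finset.sum_const_zero]
  simp only [Fin.isValue, show ((0:Fin 2) = 1) = False by simp, and_true, and_false,
    if_false, Finset.sum_const_zero, add_zero, zero_add]
  simp only [eq_comm (a := (s:ℕ))]
  rw [sum_succ_ite]
  simp only [Finset.sum_ite_eq, Finset.mem_univ, if_true, Matrix.one_apply, ite_mul,
    one_mul, zero_mul, Finset.sum_ite_eq, Matrix.mulVec, dotProduct]

lemma N_mulVec_x (v : (Fin T × Fin nx) → ℝ) (s : Fin T) (i : Fin nx) :
    (NMat T nx A B).mulVec v ((s, 1), i) = B.mulVec (fun m => v (s, m)) i := by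
  simp only [Matrix.mulVec, dotProduct, NMat, Fintype.sum_prod_type]
  simp only [add_mul, ite_mul, zero_mul, Finset.sum_add_distrib,
    Finset.sum_ite_irrel, Finset.sum_const_zero]
  simp only [Fin.isValue, show ((1:Fin 2) = 0) = False by simp, and_true, and_false,
    if_false, Finset.sum_const_zero, add_zero, zero_add]
  simp [Finset.sum_ite_eq]

end helpers

section main
variable {T nx : ℕ} {A B : Matrix (Fin nx) (Fin nx) ℝ}

lemma Ae_N_zero (hB : IsUnit B) (v : (Fin T × Fin nx) → ℝ) :
    (AeMat T nx A B).mulVec ((NMat T nx A B).mulVec v) = 0 := by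
  have hBB : B * B⁻¹ = 1 := Matrix.mul_nonsing_inv B ((Matrix.isUnit_iff_isUnit_det B).mp hB)
  have hkey : B * (B⁻¹ * A * B) = A * B := by
    rw [← Matrix.mul_assoc, ← Matrix.mul_assoc, hBB, Matrix.one_mul]
  funext p
  obtain ⟨t, i⟩ := p
  rw [Ae_mulVec_apply, N_mulVec_x]
  by_cases h : 0 < (t : ℕ)
  · rw [dif_pos h]
    simp only [N_mulVec_u, N_mulVec_x, dif_pos h]
    have e1 : (fun m => v (t, m) +
        (-(B⁻¹ * A * B)).mulVec (fun m' => v (⟨(t : ℕ) - 1, by omega⟩, m')) m) =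
        (fun m => v (t, m)) + (-(B⁻¹ * A * B)).mulVec (fun m' => v (⟨(t : ℕ) - 1, by omega⟩, m')) := rfl
    rw [e1, Matrix.mulVec_add]
    have e2 : (fun m => B.mulVec (fun m' => v (⟨(t : ℕ) - 1, by omega⟩, m')) m) =
        B.mulVec (fun m' => v (⟨(t : ℕ) - 1, by omega⟩, m')) := rfl
    rw [e2, Matrix.mulVec_mulVec, Matrix.mulVec_mulVec]
    have e3 : (-B) * -(B⁻¹ * A * B) = A * B := by rw [neg_mul_neg, hkey]
    have e4 : (-A) * B = -(A * B) := by rw [neg_mul]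
    rw [e3, e4]
    simp [Matrix.neg_mulVec]
  · rw [dif_neg h]
    simp only [N_mulVec_u, dif_neg h, add_zero]
    simp [Matrix.neg_mulVec]

lemma N_inj : Function.Injective (NMat T nx A B).mulVecLin := by
  rw [← LinearMap.ker_eq_bot, LinearMap.ker_eq_bot']
  intro v hv
  have key : ∀ n : ℕ, ∀ k : Fin T, (k : ℕ) = n → ∀ i, v (k, i) = 0 := by
    intro n
    induction n using Nat.strong_induction_on with
    | _ n ih =>
      intro k hk i
      have h0 : (NMat T nx A B).mulVec v ((k, 0), i) = 0 := by
        rw [show (NMat T nx A B).mulVec v = 0 from hv]; rfl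
      rw [N_mulVec_u] at h0
      by_cases hpos : 0 < (k : ℕ)
      · rw [dif_pos hpos] at h0
        have hz : (fun m => v (⟨(k : ℕ) - 1, by omega⟩, m)) = 0 := by
          funext m
          exact ih ((k : ℕ) - 1) (by omega) _ (by simp) m
        rw [hz, Matrix.mulVec_zero] at h0
        simpa using h0
      · rw [dif_neg hpos, add_zero] at h0
        exact h0
  funext p
  obtain ⟨k, i⟩ := p
  exact key (k : ℕ) k rfl i

lemma Ae_surj : Function.Surjective (AeMat T nx A B).mulVecLin := by
  intro w
  set wext : ℕ → Fin nx → ℝ := fun t i => if h : t < T then w (⟨t, h⟩, i) else 0 with hwext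
  set xs : ℕ → Fin nx → ℝ :=
    fun t => Nat.rec (motive := fun _ => Fin nx → ℝ) 0
      (fun t x => fun i => wext t i + A.mulVec x i) t with hxs
  refine ⟨fun p => if p.1.2 = 1 then xs ((p.1.1 : ℕ) + 1) p.2 else 0, ?_⟩
  funext p
  obtain ⟨t, i⟩ := p
  rw [Matrix.mulVecLin_apply, Ae_mulVec_apply]
  have hu : (fun m => if ((0 : Fin 2) = 1) then xs ((t : ℕ) + 1) m else 0) = (0 : Fin nx → ℝ) := by
    funext m; simp
  simp only [Fin.isValue, show ((0:Fin 2) = 1) = False by simp, show ((1:Fin 2) = 1) = True by simp,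
    if_false, if_true]
  have h0 : (-B).mulVec (fun _ : Fin nx => (0:ℝ)) i = 0 := by
    rw [show (fun _ : Fin nx => (0:ℝ)) = (0 : Fin nx → ℝ) from rfl, Matrix.mulVec_zero]; rfl
  rw [h0, zero_add]
  have hxsucc : ∀ n, xs (n + 1) = fun i => wext n i + A.mulVec (xs n) i := fun n => rfl
  by_cases h : 0 < (t : ℕ)
  · rw [dif_pos h]
    rw [hxsucc]
    have ht1 : ((⟨(t : ℕ) - 1, by omega⟩ : Fin T) : ℕ) + 1 = (t : ℕ) := by simp; omega
    have : (fun m => xs (((⟨(t : ℕ) - 1, by omega⟩ : Fin T) : ℕ) + 1) m) = xs (t : ℕ) := by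
      rw [ht1]
    rw [this]
    rw [Matrix.neg_mulVec]
    have hw : wext (t : ℕ) i = w (t, i) := by
      rw [hwext]; simp [t.isLt]
    simp [hw]
  · rw [dif_neg h]
    rw [hxsucc]
    have ht0 : (t : ℕ) = 0 := by omega
    have hxs0 : xs (t : ℕ) = 0 := by rw [ht0]; rfl
    rw [hxs0, Matrix.mulVec_zero]
    have hw : wext (t : ℕ) i = w (t, i) := by
      rw [hwext]; simp [t.isLt]
    simp [hw]

end main

/-- The columns of `N` form a basis of the kernel of `A_e`: the column
space of `N` equals the null space `{y : A_e y = 0}`, which has dimension `T·n_x`. -/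
theorem N_basis_of_ker_Ae (T nx : ℕ) (hT : 1 ≤ T) (hnx : 1 ≤ nx)
    (A B : Matrix (Fin nx) (Fin nx) ℝ) (hB : IsUnit B) :
    LinearMap.range (NMat T nx A B).mulVecLin = LinearMap.ker (AeMat T nx A B).mulVecLin ∧
    Module.finrank ℝ (LinearMap.ker (AeMat T nx A B).mulVecLin) = T * nx := by
  have hle : LinearMap.range (NMat T nx A B).mulVecLin ≤
      LinearMap.ker (AeMat T nx A B).mulVecLin := by
    rintro _ ⟨v, rfl⟩
    rw [LinearMap.mem_ker, Matrix.mulVecLin_apply, Matrix.mulVecLin_apply]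
    exact Ae_N_zero hB v
  have hrange : Module.finrank ℝ (LinearMap.range (NMat T nx A B).mulVecLin) = T * nx := by
    rw [LinearMap.finrank_range_of_inj N_inj, Module.finrank_fintype_fun_eq_card]
    simp [Fintype.card_prod]
  have hker : Module.finrank ℝ (LinearMap.ker (AeMat T nx A B).mulVecLin) = T * nx := by
    have hrn := LinearMap.finrank_range_add_finrank_ker (AeMat T nx A B).mulVecLin
    have hr : Module.finrank ℝ (LinearMap.range (AeMat T nx A B).mulVecLin) = T * nx := by
      rw [LinearMap.range_eq_top.mpr Ae_surj, finrank_top, Module.finrank_fintype_fun_eq_card]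
      simp [Fintype.card_prod]
    rw [hr, Module.finrank_fintype_fun_eq_card] at hrn
    have hcard : Fintype.card ((Fin T × Fin 2) × Fin nx) = T * nx + T * nx := by
      simp [Fintype.card_prod]; ring
    rw [hcard] at hrn
    exact Nat.add_left_cancel hrn
  exact ⟨Submodule.eq_of_le_of_finrank_eq hle (by rw [hrange, hker]), hker⟩
end

section
/- Block-wise Cholesky factorization of a block tridiagonal matrix: if Y ∈ ℝ^{Tm×Tm} is symmetric positive definite and block tridiagonal (its m×m blocks satisfy Y_{ij} = 0 whenever |i − j| ≥ 2), then there exists an invertible, entrywise lower triangular matrix L ∈ ℝ^{Tm×Tm} that is block lower bidiagonal (its m×m blocks satisfy L_{ij} = 0 unless j ≤ i ≤ j+1) such that Y = L L^T. -/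
open Matrix

private theorem aux_fin_cholesky {N : ℕ} (S : Matrix (Fin N) (Fin N) ℝ) (hS : S.PosDef) :
    ∃ L : Matrix (Fin N) (Fin N) ℝ, IsUnit L ∧ (∀ k l : Fin N, k < l → L k l = 0) ∧
      S = L * Lᵀ := by
  haveI : WellFoundedLT (Fin N) := inferInstance
  haveI hInv : Invertible (LDL.lowerInv hS) := by
    have h := LDL.invertibleLowerInv hS
    convert h using 2
  set A := LDL.lowerInv hS with hA
  have hAunit : IsUnit A := isUnit_of_invertible A
  have hAdet : IsUnit A.det := (Matrix.isUnit_iff_isUnit_det _).mp hAunit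
  have hdpos : ∀ i, 0 < LDL.diagEntries hS i := by
    intro i
    have hrow : A i ≠ 0 := by
      intro h0
      have hdet : A.det = 0 :=
        Matrix.det_eq_zero_of_row_eq_zero i (by intro j; rw [h0]; rfl)
      rw [hdet] at hAdet
      exact hAdet.ne_zero rfl
    have h2 := hS.dotProduct_mulVec_pos hrow
    have hde : LDL.diagEntries hS i = star (A i) ⬝ᵥ (S *ᵥ A i) := by
      simp [LDL.diagEntries, EuclideanSpace.inner_toLp_toLp, ← hA, dotProduct, mul_comm]
    rw [hde]
    exact h2
  have hdiag_ne : ∀ i j : Fin N, i ≠ j → LDL.diag hS i j = 0 := by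
    intro i j hij
    unfold LDL.diag
    simp [Matrix.diagonal_apply, hij]
  have hdiag_eq : ∀ i : Fin N, LDL.diag hS i i = LDL.diagEntries hS i := by
    intro i
    unfold LDL.diag
    simp [Matrix.diagonal_apply]
  set C : Matrix (Fin N) (Fin N) ℝ :=
    Matrix.diagonal (fun i => Real.sqrt (LDL.diagEntries hS i)) with hC
  have hCunit : IsUnit C := by
    rw [hC, Matrix.isUnit_iff_isUnit_det, Matrix.det_diagonal]
    exact isUnit_iff_ne_zero.mpr (Finset.prod_ne_zero_iff.mpr fun i _ =>
      ne_of_gt (Real.sqrt_pos.mpr (hdpos i)))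
  have hCC : C * Cᵀ = LDL.diag hS := by
    ext i j
    rw [hC, Matrix.diagonal_transpose, Matrix.diagonal_mul_diagonal]
    by_cases hij : i = j
    · subst hij
      rw [Matrix.diagonal_apply_eq, hdiag_eq]
      exact Real.mul_self_sqrt (hdpos i).le
    · rw [Matrix.diagonal_apply_ne _ hij, hdiag_ne i j hij]
  have key : LDL.diag hS = A * S * Aᵀ := by
    have h := LDL.diag_eq_lowerInv_conj hS
    have hconj : (LDL.lowerInv hS)ᴴ = (LDL.lowerInv hS)ᵀ := by
      ext i j; simp [Matrix.conjTranspose_apply]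
    rw [hconj] at h
    exact h
  have hS_eq : S = A⁻¹ * LDL.diag hS * (A⁻¹)ᵀ := by
    have hAT : IsUnit (Aᵀ).det := by rw [Matrix.det_transpose]; exact hAdet
    rw [key, Matrix.transpose_nonsing_inv]
    rw [Matrix.mul_assoc A S Aᵀ, ← Matrix.mul_assoc A⁻¹ A (S * Aᵀ),
      Matrix.nonsing_inv_mul _ hAdet, Matrix.one_mul,
      Matrix.mul_assoc S Aᵀ (Aᵀ)⁻¹, Matrix.mul_nonsing_inv _ hAT, Matrix.mul_one]
  have hAtri : A.BlockTriangular OrderDual.toDual := fun i j hij =>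
    LDL.lowerInv_triangular hS hij
  have hAinvtri : (A⁻¹).BlockTriangular OrderDual.toDual :=
    blockTriangular_inv_of_blockTriangular hAtri
  refine ⟨A⁻¹ * C, (isUnit_nonsing_inv_iff.mpr hAunit).mul hCunit, ?_, ?_⟩
  · intro k l hkl
    rw [hC, Matrix.mul_diagonal]
    have : A⁻¹ k l = 0 := hAinvtri (by exact_mod_cast hkl)
    rw [this, zero_mul]
  · rw [hS_eq, ← hCC, Matrix.transpose_mul, ← Matrix.mul_assoc, Matrix.mul_assoc (A⁻¹) C,
      ← Matrix.mul_assoc, Matrix.mul_assoc (A⁻¹ * C) Cᵀ]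

private theorem aux_posDef_submatrix {n o : Type*} [Fintype n] [Fintype o]
    {M : Matrix n n ℝ} (hM : M.PosDef) (e : o ≃ n) : (M.submatrix e e).PosDef := by
  refine Matrix.PosDef.of_dotProduct_mulVec_pos (hM.1.submatrix e) (fun x hx => ?_)
  have h1 : (M.submatrix e e) *ᵥ x = (M *ᵥ (x ∘ e.symm)) ∘ e :=
    Matrix.submatrix_mulVec_equiv M x e e
  have hx' : x ∘ e.symm ≠ 0 := by
    intro h0
    apply hx
    funext k
    have := congrFun h0 (e k)
    simpa using this
  have h2 := hM.dotProduct_mulVec_pos hx'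
  rw [h1]
  have h3 : star x ⬝ᵥ ((M *ᵥ (x ∘ e.symm)) ∘ e) = star (x ∘ e.symm) ⬝ᵥ (M *ᵥ (x ∘ e.symm)) := by
    simp only [dotProduct]
    exact Fintype.sum_equiv e _ _ (fun k => by simp [Function.comp, Pi.star_apply])
  rw [h3]
  exact h2


/-- Block-wise Cholesky factorization of a block tridiagonal matrix.
If `Y ∈ ℝ^{Tm×Tm}` is symmetric positive definite and block tridiagonal (its `m×m`
blocks satisfy `Y_{ij} = 0` whenever `|i − j| ≥ 2`), then there is an invertible,
entrywise lower triangular `L ∈ ℝ^{Tm×Tm}` (entries ordered by the natural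
lexicographic flattening `(i, a) ↦ i·m + a`) that is block lower bidiagonal
(`L_{ij} = 0` unless `j ≤ i ≤ j+1`) with `Y = L Lᵀ`. -/
theorem block_tridiagonal_cholesky (T m : ℕ) (hT : 1 ≤ T) (hm : 1 ≤ m)
    (Y : Matrix (Fin T × Fin m) (Fin T × Fin m) ℝ)
    (hY : Y.PosDef)
    (hYtri : ∀ i j : Fin T × Fin m,
      ((i.1 : ℕ) + 2 ≤ (j.1 : ℕ) ∨ (j.1 : ℕ) + 2 ≤ (i.1 : ℕ)) → Y i j = 0) :
    ∃ L : Matrix (Fin T × Fin m) (Fin T × Fin m) ℝ,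
      IsUnit L ∧
      (∀ i j : Fin T × Fin m,
        (i.1 : ℕ) * m + (i.2 : ℕ) < (j.1 : ℕ) * m + (j.2 : ℕ) → L i j = 0) ∧
      (∀ i j : Fin T × Fin m,
        ¬((j.1 : ℕ) ≤ (i.1 : ℕ) ∧ (i.1 : ℕ) ≤ (j.1 : ℕ) + 1) → L i j = 0) ∧
      Y = L * Lᵀ := by
  set e : Fin T × Fin m ≃ Fin (T * m) := finProdFinEquiv with he
  have hval : ∀ p : Fin T × Fin m, ((e p : ℕ)) = (p.1 : ℕ) * m + (p.2 : ℕ) := by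
    intro p
    have : ((e p : ℕ)) = (p.2 : ℕ) + m * (p.1 : ℕ) := rfl
    rw [this]; ring
  set S : Matrix (Fin (T * m)) (Fin (T * m)) ℝ := Y.submatrix e.symm e.symm with hSdef
  have hSpd : S.PosDef := aux_posDef_submatrix hY e.symm
  obtain ⟨L₀, hL₀unit, hL₀tri, hSfac⟩ := aux_fin_cholesky S hSpd
  set L : Matrix (Fin T × Fin m) (Fin T × Fin m) ℝ := L₀.submatrix e e with hLdef
  -- entrywise lower triangular
  have hLtri : ∀ i j : Fin T × Fin m,
      (i.1 : ℕ) * m + (i.2 : ℕ) < (j.1 : ℕ) * m + (j.2 : ℕ) → L i j = 0 := by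
    intro i j hij
    apply hL₀tri
    show (e i : ℕ) < (e j : ℕ)
    rw [hval, hval]; exact hij
  -- Y = L Lᵀ
  have hfac : Y = L * Lᵀ := by
    rw [hLdef, Matrix.transpose_submatrix, Matrix.submatrix_mul_equiv L₀ L₀ᵀ e e e,
      ← hSfac, hSdef]
    ext p q
    simp
  -- invertibility
  have hLunit : IsUnit L := by
    rw [Matrix.isUnit_iff_isUnit_det, hLdef, Matrix.det_submatrix_equiv_self]
    exact (Matrix.isUnit_iff_isUnit_det _).mp hL₀unit
  -- nonzero diagonal of L
  have hLdiagne : ∀ p : Fin T × Fin m, L p p ≠ 0 := by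
    have hdet : L₀.det = ∏ k, L₀ k k :=
      Matrix.det_of_lowerTriangular L₀ (fun k l hkl => hL₀tri k l hkl)
    have hdetne : (∏ k, L₀ k k) ≠ 0 := by
      rw [← hdet]
      exact ((Matrix.isUnit_iff_isUnit_det _).mp hL₀unit).ne_zero
    intro p hp
    apply hdetne
    exact Finset.prod_eq_zero (Finset.mem_univ (e p)) hp
  -- flattened block bound
  have hblk : ∀ p q : Fin T × Fin m,
      (p.1 : ℕ) * m + (p.2 : ℕ) < (q.1 : ℕ) * m + (q.2 : ℕ) → (p.1 : ℕ) ≤ (q.1 : ℕ) := by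
    intro p q h
    by_contra hc
    push_neg at hc
    have h1 : (q.1 : ℕ) + 1 ≤ (p.1 : ℕ) := hc
    have h2 : ((q.1 : ℕ) + 1) * m ≤ (p.1 : ℕ) * m := Nat.mul_le_mul_right m h1
    have h3 : (q.2 : ℕ) < m := q.2.isLt
    have h4 : (q.1 : ℕ) * m + (q.2 : ℕ) < ((q.1 : ℕ) + 1) * m := by
      rw [Nat.add_mul, Nat.one_mul]
      omega
    omega
  -- envelope: block lower bidiagonal structure
  have henv : ∀ n : ℕ, ∀ i j : Fin T × Fin m,
      (j.1 : ℕ) * m + (j.2 : ℕ) = n → (j.1 : ℕ) + 2 ≤ (i.1 : ℕ) → L i j = 0 := by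
    intro n
    induction n using Nat.strong_induction_on with
    | _ n ih =>
      intro i j hn hij
      have hexp : Y i j = ∑ q, L i q * L j q := by
        rw [hfac, Matrix.mul_apply]
        apply Finset.sum_congr rfl
        intro q _
        rw [Matrix.transpose_apply]
      have hYij : Y i j = 0 := hYtri i j (Or.inr (by omega))
      have hsum : ∑ q, L i q * L j q = L i j * L j j := by
        apply Finset.sum_eq_single j
        · intro q _ hqj
          rcases lt_trichotomy ((q.1 : ℕ) * m + (q.2 : ℕ)) ((j.1 : ℕ) * m + (j.2 : ℕ))
            with hlt | heq | hgt
          · have hq1 : (q.1 : ℕ) ≤ (j.1 : ℕ) := hblk q j hlt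
            have : L i q = 0 := ih _ (by omega) i q rfl (by omega)
            rw [this, zero_mul]
          · exfalso
            apply hqj
            apply e.injective
            apply Fin.ext
            rw [hval, hval, heq]
          · rw [hLtri j q hgt, mul_zero]
        · intro hj
          exact absurd (Finset.mem_univ j) hj
      have hzero : L i j * L j j = 0 := by rw [← hsum, ← hexp, hYij]
      exact (mul_eq_zero.mp hzero).resolve_right (hLdiagne j)
  refine ⟨L, hLunit, hLtri, ?_, hfac⟩
  intro i j hij
  rcases Nat.lt_or_ge (i.1 : ℕ) (j.1 : ℕ) with hlt | hge
  · apply hLtri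
    have h1 : (i.1 : ℕ) * m + (i.2 : ℕ) < ((i.1 : ℕ) + 1) * m := by
      have := i.2.isLt
      rw [Nat.add_mul, Nat.one_mul]
      omega
    have h2 : ((i.1 : ℕ) + 1) * m ≤ (j.1 : ℕ) * m := Nat.mul_le_mul_right m hlt
    omega
  · have h2 : (j.1 : ℕ) + 2 ≤ (i.1 : ℕ) := by omega
    exact henv _ i j rfl h2
end

section
/- Sparse QR decomposition of the permuted equality-constraint block (case P₂): the matrix M equals Q'·R', where Q' := blockdiag(−Q_B, −Q_A, …, −Q_A) ∈ ℝ^{T·n_x×T·n_x} is orthogonal and R' ∈ ℝ^{T·n_x×T·n_x} is the block upper bidiagonal matrix with diagonal blocks (R_B, R_A, …, R_A) and superdiagonal blocks R'_{1,2} = −Q_B^T and R'_{t,t+1} = −Q_A^T for t ≥ 2; moreover R' is entrywise upper triangular and invertible, hence M is invertible. -/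
open Matrix

/-- The permuted equality-constraint block `M ∈ ℝ^{T·n_x×T·n_x}` (case `P₂`), viewed
as a `T×T` array of `n_x×n_x` blocks: `M_{1,1} = −B̂`, `M_{t,t} = −A` for `t ≥ 2`,
`M_{t,t+1} = I`, and all other blocks zero. -/
noncomputable def MMat (T nx : ℕ) (Bhat A : Matrix (Fin nx) (Fin nx) ℝ) :
    Matrix (Fin T × Fin nx) (Fin T × Fin nx) ℝ :=
  fun p q =>
    if p.1 = q.1 then (if (p.1 : ℕ) = 0 then (-Bhat) p.2 q.2 else (-A) p.2 q.2)
    else if (p.1 : ℕ) + 1 = (q.1 : ℕ) then (1 : Matrix (Fin nx) (Fin nx) ℝ) p.2 q.2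
    else 0

/-- The orthogonal factor `Q' = blockdiag(−Q_B, −Q_A, …, −Q_A)`. -/
noncomputable def QMat (T nx : ℕ) (QB QA : Matrix (Fin nx) (Fin nx) ℝ) :
    Matrix (Fin T × Fin nx) (Fin T × Fin nx) ℝ :=
  fun p q =>
    if p.1 = q.1 then (if (p.1 : ℕ) = 0 then (-QB) p.2 q.2 else (-QA) p.2 q.2)
    else 0

/-- The triangular factor `R'`: block upper bidiagonal with diagonal blocks
`(R_B, R_A, …, R_A)` and superdiagonal blocks `R'_{1,2} = −Q_Bᵀ`,
`R'_{t,t+1} = −Q_Aᵀ` for `t ≥ 2`. -/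
noncomputable def RMat (T nx : ℕ) (QB QA RB RA : Matrix (Fin nx) (Fin nx) ℝ) :
    Matrix (Fin T × Fin nx) (Fin T × Fin nx) ℝ :=
  fun p q =>
    if p.1 = q.1 then (if (p.1 : ℕ) = 0 then RB p.2 q.2 else RA p.2 q.2)
    else if (p.1 : ℕ) + 1 = (q.1 : ℕ) then
      (if (p.1 : ℕ) = 0 then (-QBᵀ) p.2 q.2 else (-QAᵀ) p.2 q.2)
    else 0

/-- Sparse QR decomposition of the permuted equality-constraint block
(case `P₂`): with QR factorizations `B̂ = Q_B R_B` and `A = Q_A R_A` (`Q_B, Q_A`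
orthogonal, `R_B, R_A` upper triangular and invertible), the matrix `M` equals
`Q' · R'` where `Q'` is orthogonal and `R'` is entrywise upper triangular (w.r.t.
the flattened ordering `(t, i) ↦ t·n_x + i`) and invertible; hence `M` is
invertible. -/
theorem sparse_qr_case_P2 (T nx : ℕ) (hT : 1 ≤ T) (hnx : 1 ≤ nx)
    (Bhat A QB QA RB RA : Matrix (Fin nx) (Fin nx) ℝ)
    (hQB₁ : QB * QBᵀ = 1) (hQB₂ : QBᵀ * QB = 1)
    (hQA₁ : QA * QAᵀ = 1) (hQA₂ : QAᵀ * QA = 1)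
    (hRB : RB.BlockTriangular id) (hRBunit : IsUnit RB)
    (hRA : RA.BlockTriangular id) (hRAunit : IsUnit RA)
    (hBhat : Bhat = QB * RB) (hA : A = QA * RA) :
    MMat T nx Bhat A = QMat T nx QB QA * RMat T nx QB QA RB RA ∧
      (QMat T nx QB QA * (QMat T nx QB QA)ᵀ = 1 ∧
        (QMat T nx QB QA)ᵀ * QMat T nx QB QA = 1) ∧
      (RMat T nx QB QA RB RA).BlockTriangular
        (fun p : Fin T × Fin nx => (p.1 : ℕ) * nx + (p.2 : ℕ)) ∧
      IsUnit (RMat T nx QB QA RB RA) ∧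
      IsUnit (MMat T nx Bhat A) := by
  have key : ∀ (X : Matrix (Fin T × Fin nx) (Fin T × Fin nx) ℝ) (p q : Fin T × Fin nx),
      (QMat T nx QB QA * X) p q
        = ∑ j, (if (p.1 : ℕ) = 0 then (-QB) p.2 j else (-QA) p.2 j) * X (p.1, j) q := by
    intro X p q
    rw [Matrix.mul_apply, Fintype.sum_prod_type]
    rw [Finset.sum_eq_single p.1]
    · apply Finset.sum_congr rfl
      intro j _
      simp [QMat]
    · intro t _ ht
      apply Finset.sum_eq_zero
      intro j _
      simp [QMat, Ne.symm ht]
    · simp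
  have hQR : MMat T nx Bhat A = QMat T nx QB QA * RMat T nx QB QA RB RA := by
    ext ⟨t, i⟩ ⟨s, k⟩
    rw [key]
    by_cases hts : t = s
    · subst hts
      by_cases h0 : (t : ℕ) = 0
      · simp [MMat, RMat, h0, hBhat, Matrix.mul_apply, Matrix.neg_apply, neg_mul,
          Finset.sum_neg_distrib]
      · simp [MMat, RMat, h0, hA, Matrix.mul_apply, Matrix.neg_apply, neg_mul,
          Finset.sum_neg_distrib]
    · by_cases hsup : (t : ℕ) + 1 = (s : ℕ)
      · by_cases h0 : (t : ℕ) = 0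
        · have := congrFun (congrFun hQB₁ i) k
          rw [Matrix.mul_apply] at this
          simp only [MMat, RMat, if_neg hts, if_pos hsup, if_pos h0]
          rw [← this]
          apply Finset.sum_congr rfl
          intro j _
          simp
        · have := congrFun (congrFun hQA₁ i) k
          rw [Matrix.mul_apply] at this
          simp only [MMat, RMat, if_neg hts, if_pos hsup, if_neg h0]
          rw [← this]
          apply Finset.sum_congr rfl
          intro j _
          simp
      · simp [MMat, RMat, hts, hsup]
  have hortho1 : QMat T nx QB QA * (QMat T nx QB QA)ᵀ = 1 := by
    ext ⟨t, i⟩ ⟨s, k⟩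
    rw [key]
    by_cases hts : t = s
    · subst hts
      have hone : ((1 : Matrix (Fin T × Fin nx) (Fin T × Fin nx) ℝ) (t, i) (t, k))
          = (1 : Matrix (Fin nx) (Fin nx) ℝ) i k := by
        simp [Matrix.one_apply, Prod.ext_iff]
      by_cases h0 : (t : ℕ) = 0
      · have := congrFun (congrFun hQB₁ i) k
        rw [Matrix.mul_apply] at this
        rw [hone, ← this]
        apply Finset.sum_congr rfl
        intro j _
        simp [QMat, h0]
      · have := congrFun (congrFun hQA₁ i) k
        rw [Matrix.mul_apply] at this
        rw [hone, ← this]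
        apply Finset.sum_congr rfl
        intro j _
        simp [QMat, h0]
    · have hone : (1 : Matrix (Fin T × Fin nx) (Fin T × Fin nx) ℝ) (t, i) (s, k) = 0 := by
        rw [Matrix.one_apply_ne]
        intro h
        exact hts (congrArg Prod.fst h)
      rw [hone]
      apply Finset.sum_eq_zero
      intro j _
      simp [Matrix.transpose_apply, QMat, Ne.symm hts]
  have hortho2 : (QMat T nx QB QA)ᵀ * QMat T nx QB QA = 1 :=
    mul_eq_one_comm.mp hortho1
  have htri : (RMat T nx QB QA RB RA).BlockTriangular
      (fun p : Fin T × Fin nx => (p.1 : ℕ) * nx + (p.2 : ℕ)) := by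
    rintro ⟨t, i⟩ ⟨s, k⟩ h
    have h' : (s : ℕ) * nx + (k : ℕ) < (t : ℕ) * nx + (i : ℕ) := h
    by_cases hts : t = s
    · subst hts
      have h2 : (k : ℕ) < (i : ℕ) := lt_of_add_lt_add_left h'
      have hlt : (id k : Fin nx) < id i := h2
      by_cases h0 : (t : ℕ) = 0 <;> simp [RMat, h0, hRB hlt, hRA hlt]
    · have hsup : ¬ ((t : ℕ) + 1 = (s : ℕ)) := by
        have hi : (i : ℕ) < nx := i.isLt
        have hts' : (t : ℕ) ≠ (s : ℕ) := fun e => hts (Fin.ext e)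
        intro he
        rcases Nat.lt_or_ge (s : ℕ) (t : ℕ) with hc | hc
        · omega
        · have : (t : ℕ) < (s : ℕ) := lt_of_le_of_ne hc hts'
          nlinarith [k.isLt]
      simp [RMat, hts, hsup]
  have hdetRB : RB.det ≠ 0 :=
    ((Matrix.isUnit_iff_isUnit_det RB).mp hRBunit).ne_zero
  have hdetRA : RA.det ≠ 0 :=
    ((Matrix.isUnit_iff_isUnit_det RA).mp hRAunit).ne_zero
  have htriF : (RMat T nx QB QA RB RA).BlockTriangular
      (fun p : Fin T × Fin nx => (p.1 : ℕ)) := by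
    rintro ⟨t, i⟩ ⟨s, k⟩ h
    have h' : (s : ℕ) < (t : ℕ) := h
    have h1 : ¬ t = s := fun e => by rw [e] at h'; exact lt_irrefl _ h'
    have h2 : ¬ ((t : ℕ) + 1 = (s : ℕ)) := by omega
    simp [RMat, h1, h2]
  have hdet : (RMat T nx QB QA RB RA).det ≠ 0 := by
    rw [htriF.det]
    apply Finset.prod_ne_zero_iff.mpr
    intro c hc
    obtain ⟨p, -, hp⟩ := Finset.mem_image.mp hc
    subst hp
    obtain ⟨t, i0⟩ := p
    show ((RMat T nx QB QA RB RA).toSquareBlock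
      (fun p : Fin T × Fin nx => (p.1 : ℕ)) ((t : ℕ))).det ≠ 0
    let e : {q : Fin T × Fin nx // (fun p : Fin T × Fin nx => (p.1 : ℕ)) q = (t : ℕ)} ≃ Fin nx :=
      { toFun := fun q => q.1.2
        invFun := fun j => ⟨(t, j), rfl⟩
        left_inv := fun q => by
          obtain ⟨⟨a, b⟩, hq⟩ := q
          have ha : a = t := Fin.ext hq
          subst ha
          rfl
        right_inv := fun j => rfl }
    have heq : ((RMat T nx QB QA RB RA).toSquareBlock
        (fun p : Fin T × Fin nx => (p.1 : ℕ)) (t : ℕ))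
        = (if (t : ℕ) = 0 then RB else RA).submatrix e e := by
      ext q r
      have hq : q.1.1 = t := Fin.ext q.2
      have hr : r.1.1 = t := Fin.ext r.2
      have hqr : q.1.1 = r.1.1 := by rw [hq, hr]
      show RMat T nx QB QA RB RA q.1 r.1
        = (if (t : ℕ) = 0 then RB else RA).submatrix e e q r
      simp only [RMat, Matrix.submatrix_apply, if_pos hqr]
      rw [hq]
      split <;> rfl
    rw [heq, Matrix.det_submatrix_equiv_self]
    split
    · exact hdetRB
    · exact hdetRA
  have hRunit : IsUnit (RMat T nx QB QA RB RA) :=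
    (Matrix.isUnit_iff_isUnit_det _).mpr (isUnit_iff_ne_zero.mpr hdet)
  have hQunit : IsUnit (QMat T nx QB QA) := by
    rw [Matrix.isUnit_iff_isUnit_det]
    refine IsUnit.of_mul_eq_one ((QMat T nx QB QA)ᵀ).det ?_
    rw [← Matrix.det_mul, hortho1, Matrix.det_one]
  refine ⟨hQR, ⟨hortho1, hortho2⟩, htri, hRunit, ?_⟩
  rw [hQR]
  exact hQunit.mul hRunit
end
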